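/- Let G be a subset partition graph of dimension d on symbol set [n] with underlying family 𝒜 of d-sets, and suppose G has at least one edge. Then there exists a subset partition graph G'' of dimension d on [n] with the same underlying family 𝒜, in which every vertex consists of exactly one d-set, whose diameter equals the diameter of G, and such that if G satisfies any or all of the properties dimension reduction, adjacency, and endpoint count, then G'' satisfies the same properties. -/

import Mathlib

/-- Dimension reduction for a subset partition graph. -/
def spgDimRed (n d : ℕ) {V : Type} (G : SimpleGraph V)
    (part : V → Finset (Finset (Fin n))) : Prop :=
  ∀ F : Finset (Fin n), F.card ≤ d - 1 →
    (G.induce {v | ∃ A ∈ part v, F ⊆ A}).Connected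

/-- Adjacency for a subset partition graph. -/
def spgAdj (n d : ℕ) {V : Type} (G : SimpleGraph V)
    (part : V → Finset (Finset (Fin n))) : Prop :=
  ∀ (v v' : V) (A A' : Finset (Fin n)), A ∈ part v → A' ∈ part v' →
    (A ∩ A').card = d - 1 → v = v' ∨ G.Adj v v'

/-- Endpoint count for a subset partition graph. -/
def spgEndpoint (n d : ℕ) {V : Type} [Fintype V]
    (part : V → Finset (Finset (Fin n))) : Prop :=
  ∀ F : Finset (Fin n), F.card = d - 1 →
    ((Finset.univ.biUnion part).filter (fun A => F ⊆ A)).card ≤ 2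


open SimpleGraph

variable {n : ℕ} {V : Type} [Fintype V] [DecidableEq V]

noncomputable def spgPi (part : V → Finset (Finset (Fin n)))
    (a : {A // A ∈ Finset.univ.biUnion part}) : V :=
  (Finset.mem_biUnion.mp a.2).choose

lemma spgPi_mem (part : V → Finset (Finset (Fin n)))
    (a : {A // A ∈ Finset.univ.biUnion part}) : a.1 ∈ part (spgPi part a) :=
  (Finset.mem_biUnion.mp a.2).choose_spec.2

lemma spgPi_eq (part : V → Finset (Finset (Fin n)))
    (hdisj : ∀ v w, v ≠ w → Disjoint (part v) (part w))
    (a : {A // A ∈ Finset.univ.biUnion part}) {v : V} (h : a.1 ∈ part v) :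
    spgPi part a = v := by
  by_contra hne
  exact (Finset.disjoint_left.mp (hdisj _ _ hne) (spgPi_mem part a)) h

noncomputable def spgSigma (part : V → Finset (Finset (Fin n)))
    (hne : ∀ v, (part v).Nonempty) (v : V) : {A // A ∈ Finset.univ.biUnion part} :=
  ⟨(hne v).choose, Finset.mem_biUnion.mpr ⟨v, Finset.mem_univ v, (hne v).choose_spec⟩⟩

lemma spgPi_sigma (part : V → Finset (Finset (Fin n)))
    (hne : ∀ v, (part v).Nonempty)
    (hdisj : ∀ v w, v ≠ w → Disjoint (part v) (part w)) (v : V) :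
    spgPi part (spgSigma part hne v) = v :=
  spgPi_eq part hdisj _ (hne v).choose_spec

noncomputable def spgLift (G : SimpleGraph V) (part : V → Finset (Finset (Fin n))) :
    SimpleGraph {A // A ∈ Finset.univ.biUnion part} where
  Adj a b := a ≠ b ∧ (spgPi part a = spgPi part b ∨ G.Adj (spgPi part a) (spgPi part b))
  symm := by
    constructor
    rintro a b ⟨h1, h2⟩
    exact ⟨h1.symm, h2.elim (fun e => Or.inl e.symm) (fun e => Or.inr e.symm)⟩
  loopless := by constructor; rintro a ⟨h1, _⟩; exact h1 rfl

set_option linter.unusedSectionVars false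

lemma spg_project (G : SimpleGraph V) (part : V → Finset (Finset (Fin n))) :
    ∀ {a b} (p : (spgLift G part).Walk a b),
      ∃ q : G.Walk (spgPi part a) (spgPi part b), q.length ≤ p.length := by
  intro a b p
  induction p with
  | nil => exact ⟨SimpleGraph.Walk.nil, le_refl _⟩
  | cons h p ih =>
    obtain ⟨q, hq⟩ := ih
    rcases h.2 with he | ha
    · rw [he]; exact ⟨q, hq.trans (Nat.le_succ _)⟩
    · exact ⟨SimpleGraph.Walk.cons ha q, Nat.succ_le_succ hq⟩

lemma spg_lift_walk (G : SimpleGraph V) (part : V → Finset (Finset (Fin n)))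
    (hne : ∀ v, (part v).Nonempty)
    (hdisj : ∀ v w, v ≠ w → Disjoint (part v) (part w)) :
    ∀ {u v} (p : G.Walk u v) (a b : {A // A ∈ Finset.univ.biUnion part}),
      spgPi part a = u → spgPi part b = v → spgPi part a ≠ spgPi part b →
      ∃ q : (spgLift G part).Walk a b, q.length ≤ p.length := by
  intro u v p
  induction p with
  | nil =>
    intro a b ha hb hno
    exact absurd (ha.trans hb.symm) hno
  | @cons u w v h p ih =>
    intro a b ha hb hno
    by_cases hw : spgPi part b = w
    · have hadj : (spgLift G part).Adj a b :=
        ⟨fun e => hno (e ▸ rfl), Or.inr (by rw [ha, hw]; exact h)⟩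
      exact ⟨hadj.toWalk, Nat.succ_le_succ (Nat.zero_le _)⟩
    · set c := spgSigma part hne w with hc
      have hcw : spgPi part c = w := spgPi_sigma part hne hdisj w
      obtain ⟨q, hq⟩ := ih c b hcw hb (by rw [hcw]; exact fun e => hw e.symm)
      have hadj : (spgLift G part).Adj a c := by
        refine ⟨fun e => ?_, Or.inr (by rw [ha, hcw]; exact h)⟩
        · rw [e, hcw] at ha; exact h.ne (ha ▸ rfl)
      exact ⟨SimpleGraph.Walk.cons hadj q, Nat.succ_le_succ hq⟩

lemma spg_lift_connected (G : SimpleGraph V) (part : V → Finset (Finset (Fin n)))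
    (hconn : G.Connected) (hne : ∀ v, (part v).Nonempty)
    (hdisj : ∀ v w, v ≠ w → Disjoint (part v) (part w)) :
    (spgLift G part).Connected := by
  have hV : Nonempty V := hconn.nonempty
  rw [SimpleGraph.connected_iff]
  refine ⟨fun a b => ?_, ⟨spgSigma part hne (Classical.arbitrary V)⟩⟩
  rcases eq_or_ne (spgPi part a) (spgPi part b) with he | hno
  · rcases eq_or_ne a b with rfl | hab
    · exact SimpleGraph.Reachable.refl a
    · exact (SimpleGraph.Adj.reachable ⟨hab, Or.inl he⟩)
  · obtain ⟨p⟩ := hconn (spgPi part a) (spgPi part b)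
    obtain ⟨q, _⟩ := spg_lift_walk G part hne hdisj p a b rfl rfl hno
    exact ⟨q⟩

lemma spg_ediam (G : SimpleGraph V) (part : V → Finset (Finset (Fin n)))
    (hconn : G.Connected) (hne : ∀ v, (part v).Nonempty)
    (hdisj : ∀ v w, v ≠ w → Disjoint (part v) (part w))
    (hedge : ∃ u v : V, G.Adj u v) :
    (spgLift G part).ediam = G.ediam := by
  obtain ⟨u0, v0, huv⟩ := hedge
  haveI hnt : Nontrivial V := ⟨u0, v0, huv.ne⟩
  have hconn'' := spg_lift_connected G part hconn hne hdisj
  apply le_antisymm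
  · apply SimpleGraph.ediam_le_of_edist_le
    intro a b
    rcases eq_or_ne (spgPi part a) (spgPi part b) with he | hno
    · rcases eq_or_ne a b with rfl | hab
      · simp
      · have h1 : (spgLift G part).edist a b = 1 :=
          SimpleGraph.edist_eq_one_iff_adj.mpr ⟨hab, Or.inl he⟩
        rw [h1]
        exact Order.one_le_iff_pos.mpr (pos_iff_ne_zero.mpr SimpleGraph.ediam_ne_zero)
    · obtain ⟨p, hp⟩ := (hconn (spgPi part a) (spgPi part b)).exists_walk_length_eq_edist
      obtain ⟨q, hq⟩ := spg_lift_walk G part hne hdisj p a b rfl rfl hno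
      calc (spgLift G part).edist a b ≤ q.length := SimpleGraph.edist_le q
        _ ≤ (p.length : ℕ∞) := by exact_mod_cast hq
        _ = G.edist (spgPi part a) (spgPi part b) := hp
        _ ≤ G.ediam := SimpleGraph.edist_le_ediam
  · apply SimpleGraph.ediam_le_of_edist_le
    intro u v
    obtain ⟨p, hp⟩ :=
      (hconn'' (spgSigma part hne u) (spgSigma part hne v)).exists_walk_length_eq_edist
    obtain ⟨q, hq⟩ := spg_project G part p
    have h1 : G.edist u v ≤ (q.length : ℕ∞) := by
      have h2 := SimpleGraph.edist_le
        (q.copy (spgPi_sigma part hne hdisj u) (spgPi_sigma part hne hdisj v))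
      rwa [SimpleGraph.Walk.length_copy] at h2
    calc G.edist u v ≤ (q.length : ℕ∞) := h1
      _ ≤ (p.length : ℕ∞) := by exact_mod_cast hq
      _ = (spgLift G part).edist _ _ := hp
      _ ≤ (spgLift G part).ediam := SimpleGraph.edist_le_ediam

lemma spg_dimred (d : ℕ) (G : SimpleGraph V) (part : V → Finset (Finset (Fin n)))
    (hne : ∀ v, (part v).Nonempty)
    (hdisj : ∀ v w, v ≠ w → Disjoint (part v) (part w))
    (hDR : spgDimRed n d G part) :
    spgDimRed n d (spgLift G part) (fun a => ({a.1} : Finset (Finset (Fin n)))) := by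
  intro F hF
  have hS := hDR F hF
  set S : Set V := {v | ∃ A ∈ part v, F ⊆ A} with hSdef
  set T : Set {A // A ∈ Finset.univ.biUnion part} :=
    {a | ∃ A ∈ ({a.1} : Finset (Finset (Fin n))), F ⊆ A} with hTdef
  have hmemT : ∀ a, a ∈ T ↔ F ⊆ a.1 := by intro a; simp [hTdef]
  have hchoice : ∀ x : V, x ∈ S → ∃ A, A ∈ part x ∧ F ⊆ A := by
    intro x hx; simpa [hSdef] using hx
  let τ : ↥S → ↥T := fun x =>
    ⟨⟨(hchoice x.1 x.2).choose,
       Finset.mem_biUnion.mpr ⟨x.1, Finset.mem_univ _, (hchoice x.1 x.2).choose_spec.1⟩⟩,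
      (hmemT _).mpr (hchoice x.1 x.2).choose_spec.2⟩
  have hτpi : ∀ x : ↥S, spgPi part (τ x).1 = x.1 :=
    fun x => spgPi_eq part hdisj _ (hchoice x.1 x.2).choose_spec.1
  have key : ∀ (x y : ↥S) (p : (G.induce S).Walk x y),
      ((spgLift G part).induce T).Reachable (τ x) (τ y) := by
    intro x y p
    induction p with
    | nil => exact SimpleGraph.Reachable.refl _
    | @cons x w y h p ih =>
      refine SimpleGraph.Reachable.trans (SimpleGraph.Adj.reachable ?_) ih
      have hGxw : G.Adj x.1 w.1 := h
      have hne' : spgPi part (τ x).1 ≠ spgPi part (τ w).1 := by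
        rw [hτpi, hτpi]; exact hGxw.ne
      simp only [SimpleGraph.comap_adj, Function.Embedding.coe_subtype]
      exact ⟨fun e => hne' (congrArg (spgPi part) e), Or.inr (by rw [hτpi, hτpi]; exact hGxw)⟩
  have attach : ∀ a : ↥T, ∃ x : ↥S,
      ((spgLift G part).induce T).Reachable a (τ x) := by
    intro a
    have haS : spgPi part a.1 ∈ S := ⟨a.1.1, spgPi_mem part a.1, (hmemT _).mp a.2⟩
    refine ⟨⟨spgPi part a.1, haS⟩, ?_⟩
    rcases eq_or_ne a (τ ⟨spgPi part a.1, haS⟩) with e | hne'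
    · rw [← e]
    · refine SimpleGraph.Adj.reachable ?_
      have hpi : spgPi part (τ ⟨spgPi part a.1, haS⟩).1 = spgPi part a.1 := hτpi _
      simp only [SimpleGraph.comap_adj, Function.Embedding.coe_subtype]
      exact ⟨fun e => hne' (Subtype.ext e), Or.inl (by rw [hpi])⟩
  rw [SimpleGraph.connected_iff]
  constructor
  · intro a b
    obtain ⟨x, hax⟩ := attach a
    obtain ⟨y, hby⟩ := attach b
    obtain ⟨p⟩ := hS.preconnected x y
    exact hax.trans ((key x y p).trans hby.symm)
  · obtain ⟨x⟩ := hS.nonempty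
    exact ⟨τ x⟩


/-- Any subset partition graph with at least one edge can be turned into a subset
partition graph (on the vertex set `𝒜` itself, each vertex carrying exactly one
`d`-set) with the same underlying family, the same diameter, and inheriting
dimension reduction, adjacency and endpoint count. -/
theorem spg_to_singleton_spg (n d : ℕ) (V : Type) [Fintype V] [DecidableEq V]
    (G : SimpleGraph V) (part : V → Finset (Finset (Fin n)))
    (hconn : G.Connected)
    (hne : ∀ v, (part v).Nonempty)
    (hcard : ∀ v, ∀ A ∈ part v, A.card = d)
    (hdisj : ∀ v w, v ≠ w → Disjoint (part v) (part w))
    (hedge : ∃ u v : V, G.Adj u v) :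
    ∃ G'' : SimpleGraph {A // A ∈ Finset.univ.biUnion part},
      G''.Connected ∧
      -- each vertex consists of exactly one d-set:
      (∀ a : {A // A ∈ Finset.univ.biUnion part},
        (({a.1} : Finset (Finset (Fin n))).Nonempty) ∧
        (∀ A₀ ∈ ({a.1} : Finset (Finset (Fin n))), A₀.card = d)) ∧
      (∀ a b : {A // A ∈ Finset.univ.biUnion part}, a ≠ b →
        Disjoint ({a.1} : Finset (Finset (Fin n))) {b.1}) ∧
      G''.diam = G.diam ∧
      (spgDimRed n d G part →
        spgDimRed n d G'' (fun a => ({a.1} : Finset (Finset (Fin n))))) ∧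
      (spgAdj n d G part →
        spgAdj n d G'' (fun a => ({a.1} : Finset (Finset (Fin n))))) ∧
      (spgEndpoint n d part →
        spgEndpoint n d (fun a : {A // A ∈ Finset.univ.biUnion part} =>
          ({a.1} : Finset (Finset (Fin n))))) := by
  refine ⟨spgLift G part, spg_lift_connected G part hconn hne hdisj, ?_, ?_, ?_, ?_, ?_, ?_⟩
  · intro a
    refine ⟨Finset.singleton_nonempty _, ?_⟩
    intro A₀ hA₀
    rw [Finset.mem_singleton] at hA₀
    subst hA₀
    exact hcard _ _ (spgPi_mem part a)
  · intro a b hab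
    rw [Finset.disjoint_singleton]
    exact fun e => hab (Subtype.ext e)
  · show (spgLift G part).ediam.toNat = G.ediam.toNat
    rw [spg_ediam G part hconn hne hdisj hedge]
  · exact spg_dimred d G part hne hdisj
  · intro hA a b A A' hA1 hA2 hcap
    rw [Finset.mem_singleton] at hA1 hA2
    subst hA1; subst hA2
    by_cases hab : a = b
    · exact Or.inl hab
    · refine Or.inr ⟨hab, ?_⟩
      rcases hA (spgPi part a) (spgPi part b) a.1 b.1 (spgPi_mem part a)
        (spgPi_mem part b) hcap with e | e
      · exact Or.inl e
      · exact Or.inr e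
  · intro hE F hFcard
    have hEq : (Finset.univ.biUnion
        (fun a : {A // A ∈ Finset.univ.biUnion part} =>
          ({a.1} : Finset (Finset (Fin n))))) = Finset.univ.biUnion part := by
      ext A
      constructor
      · intro h
        obtain ⟨a, -, ha⟩ := Finset.mem_biUnion.mp h
        rw [Finset.mem_singleton] at ha
        exact ha ▸ a.2
      · intro h
        exact Finset.mem_biUnion.mpr ⟨⟨A, h⟩, @Finset.mem_univ _ (Subtype.fintype _) _, Finset.mem_singleton_self _⟩
    rw [hEq]
    exact hE F hFcard
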